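/- Let K ≥ 2 and T ≥ K be integers, let loḡ(K) = 1/2 + Σ_{i=2}^{K} 1/i, and for 1 ≤ k ≤ K − 1 define n_k = ⌈ (T − K) / ( loḡ(K)·(K + 1 − k) ) ⌉. Then n₁ + n₂ + ⋯ + n_{K−2} + 2·n_{K−1} ≤ T. -/

import Mathlib

open Finset

/-- `loḡ(K) = 1/2 + Σ_{i=2}^{K} 1/i`. -/
noncomputable def logBar (K : ℕ) : ℝ := 1 / 2 + ∑ i ∈ Finset.Icc 2 K, (1 : ℝ) / i

/-- The phase lengths of the Successive Rejects framework:
`n_k = ⌈(T − K) / (loḡ(K)·(K + 1 − k))⌉` for `1 ≤ k ≤ K − 1`. -/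
noncomputable def srPulls (K T k : ℕ) : ℕ :=
  ⌈((T : ℝ) - K) / (logBar K * ((K : ℝ) + 1 - k))⌉₊

lemma logBar_pos (K : ℕ) : 0 < logBar K := by
  have h : 0 ≤ ∑ i ∈ Finset.Icc 2 K, (1 : ℝ) / i :=
    Finset.sum_nonneg fun i _ => by positivity
  unfold logBar; linarith

/-- Budget feasibility of the Successive Rejects phase lengths:
`n₁ + n₂ + ⋯ + n_{K−2} + 2·n_{K−1} ≤ T`. -/
theorem sr_budget_feasible (K T : ℕ) (hK : 2 ≤ K) (hT : K ≤ T) :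
    (∑ k ∈ Finset.Icc 1 (K - 2), srPulls K T k) + 2 * srPulls K T (K - 1) ≤ T := by
  have hL := logBar_pos K
  set x : ℕ → ℝ := fun k => ((T : ℝ) - K) / (logBar K * ((K : ℝ) + 1 - k)) with hxdef
  have hTK : (0:ℝ) ≤ (T:ℝ) - K := by
    have : (K:ℝ) ≤ T := by exact_mod_cast hT
    linarith
  have hden : ∀ k : ℕ, k ≤ K - 1 → (0:ℝ) < (K:ℝ) + 1 - k := by
    intro k hk
    have : (k:ℝ) < (K:ℝ) + 1 := by exact_mod_cast (show k < K + 1 by omega)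
    linarith
  have hceil : ∀ k : ℕ, k ≤ K - 1 → (srPulls K T k : ℝ) ≤ x k + 1 := by
    intro k hk
    have hd := hden k hk
    have hx0 : 0 ≤ x k := div_nonneg hTK (le_of_lt (by positivity))
    have := Nat.ceil_lt_add_one hx0
    exact le_of_lt this
  -- the value of the last phase
  have hlast : x (K - 1) = ((T:ℝ) - K) / (logBar K * 2) := by
    have hc : ((K - 1 : ℕ) : ℝ) = (K:ℝ) - 1 := by
      have h1 : (1:ℕ) ≤ K := by omega
      push_cast [Nat.cast_sub h1]; ring
    simp only [hxdef, hc]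
    ring_nf
  -- reindexing the sum
  have hre : ∑ k ∈ Finset.Icc 1 (K-2), (1:ℝ)/((K:ℝ) + 1 - k)
      = ∑ i ∈ Finset.Icc 3 K, (1:ℝ)/(i:ℝ) := by
    refine Finset.sum_nbij' (fun k => K + 1 - k) (fun i => K + 1 - i) ?_ ?_ ?_ ?_ ?_
    · intro a ha; simp only [Finset.mem_Icc] at ha ⊢; omega
    · intro a ha; simp only [Finset.mem_Icc] at ha ⊢; omega
    · intro a ha; simp only [Finset.mem_Icc] at ha; show K + 1 - (K + 1 - a) = a; omega
    · intro a ha; simp only [Finset.mem_Icc] at ha; show K + 1 - (K + 1 - a) = a; omega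
    · intro a ha
      simp only [Finset.mem_Icc] at ha
      show (1:ℝ)/((K:ℝ) + 1 - a) = 1/((K + 1 - a : ℕ):ℝ)
      have : ((K + 1 - a : ℕ) : ℝ) = (K:ℝ) + 1 - a := by
        have : a ≤ K + 1 := by omega
        push_cast [Nat.cast_sub this]; ring
      rw [this]
  -- logBar identity
  have hsplit : logBar K = 1 + ∑ i ∈ Finset.Icc 3 K, (1:ℝ)/(i:ℝ) := by
    have h23 : Finset.Icc 2 K = insert 2 (Finset.Icc 3 K) := by
      ext a; simp only [Finset.mem_Icc, Finset.mem_insert]; omega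
    have h2 : (2:ℕ) ∉ Finset.Icc 3 K := by simp
    unfold logBar
    rw [h23, Finset.sum_insert h2]
    push_cast
    ring
  -- key identity
  have key : (∑ k ∈ Finset.Icc 1 (K-2), x k) + 2 * x (K-1) = (T:ℝ) - K := by
    have hxk : ∀ k : ℕ, x k = ((T:ℝ) - K) / logBar K * ((1:ℝ)/((K:ℝ) + 1 - k)) := by
      intro k; simp only [hxdef]; field_simp
    calc (∑ k ∈ Finset.Icc 1 (K-2), x k) + 2 * x (K-1)
        = ((T:ℝ) - K) / logBar K *
            ((∑ k ∈ Finset.Icc 1 (K-2), (1:ℝ)/((K:ℝ)+1-k)) + 1) := by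
          rw [hlast]
          simp only [hxk, ← Finset.mul_sum]
          field_simp
      _ = ((T:ℝ) - K) / logBar K * logBar K := by rw [hre, hsplit]; ring
      _ = (T:ℝ) - K := by field_simp
  -- bound the natural-number sum in ℝ
  have hsum : ((∑ k ∈ Finset.Icc 1 (K-2), srPulls K T k : ℕ) : ℝ)
      ≤ (∑ k ∈ Finset.Icc 1 (K-2), x k) + ((K:ℝ) - 2) := by
    push_cast
    have : ∑ k ∈ Finset.Icc 1 (K-2), ((srPulls K T k : ℝ))
        ≤ ∑ k ∈ Finset.Icc 1 (K-2), (x k + 1) := by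
      refine Finset.sum_le_sum fun k hk => ?_
      simp only [Finset.mem_Icc] at hk
      exact hceil k (by omega)
    have hcard : ((Finset.Icc 1 (K-2)).card : ℝ) = (K:ℝ) - 2 := by
      rw [Nat.card_Icc]
      have : K - 2 + 1 - 1 = K - 2 := by omega
      rw [this]
      have h2 : (2:ℕ) ≤ K := hK
      push_cast [Nat.cast_sub h2]; ring
    rw [Finset.sum_add_distrib, Finset.sum_const, nsmul_eq_mul, mul_one] at this
    linarith [this, hcard.le, hcard.ge]
  have hlastb : (srPulls K T (K-1) : ℝ) ≤ x (K-1) + 1 := hceil (K-1) le_rfl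
  have final : ((∑ k ∈ Finset.Icc 1 (K-2), srPulls K T k) + 2 * srPulls K T (K-1) : ℕ) ≤ (T:ℕ) := by
    have hcast : (((∑ k ∈ Finset.Icc 1 (K-2), srPulls K T k) + 2 * srPulls K T (K-1) : ℕ) : ℝ)
        ≤ (T:ℝ) := by
      push_cast
      have hKr : (2:ℝ) ≤ (K:ℝ) := by exact_mod_cast hK
      push_cast at hsum
      linarith [hsum, hlastb, key]
    exact_mod_cast hcast
  exact final
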